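/- In a convex combination space, for any elements u, v in the convexifiable domain K(X) and any λ ∈ (0,1), the distances satisfy d([λ,u;1−λ,v], u) = (1−λ)·d(u,v) and d([λ,u;1−λ,v], v) = λ·d(u,v). -/

import Mathlib

open scoped BigOperators
open Filter MeasureTheory

/-- A convex combination space (Terán–Molchanov): a metric space with an
`n`-ary convex combination operation for positive weights summing to `1`. -/
structure CCSpace (X : Type) [MetricSpace X] where
  /-- the convex combination operation `[w 0, u 0; …; w (n-1), u (n-1)]` -/
  comb : ∀ {n : ℕ}, (Fin n → ℝ) → (Fin n → X) → X
  /-- the convexification operator -/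
  K : X → X
  comb_single : ∀ u : X, comb (fun _ : Fin 1 => (1 : ℝ)) (fun _ => u) = u
  /-- (CC.i) commutativity -/
  comb_perm : ∀ {n : ℕ} (w : Fin n → ℝ) (u : Fin n → X) (σ : Equiv.Perm (Fin n)),
    (∀ i, 0 < w i) → (∑ i, w i) = 1 → comb w u = comb (w ∘ σ) (u ∘ σ)
  /-- (CC.ii) associativity: the last two terms may be combined first -/
  comb_assoc : ∀ {n : ℕ} (w : Fin (n + 2) → ℝ) (u : Fin (n + 2) → X),
    (∀ i, 0 < w i) → (∑ i, w i) = 1 →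
    comb w u =
      comb
        (Fin.snoc (fun i : Fin n => w (Fin.castLE (by omega) i))
          (w ⟨n, by omega⟩ + w ⟨n + 1, by omega⟩))
        (Fin.snoc (fun i : Fin n => u (Fin.castLE (by omega) i))
          (comb
            ![w ⟨n, by omega⟩ / (w ⟨n, by omega⟩ + w ⟨n + 1, by omega⟩),
              w ⟨n + 1, by omega⟩ / (w ⟨n, by omega⟩ + w ⟨n + 1, by omega⟩)]
            ![u ⟨n, by omega⟩, u ⟨n + 1, by omega⟩]))
  /-- (CC.iii) continuity in the weight -/
  comb_cont : ∀ u v : X,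
    ContinuousOn (fun t : ℝ => comb ![t, 1 - t] ![u, v]) (Set.Ioo (0 : ℝ) 1)
  /-- (CC.iv) negative curvature -/
  comb_nc : ∀ {n : ℕ} (w : Fin n → ℝ) (u v : Fin n → X),
    (∀ i, 0 < w i) → (∑ i, w i) = 1 →
    dist (comb w u) (comb w v) ≤ ∑ i, w i * dist (u i) (v i)
  /-- (CC.v) convexification: `[n⁻¹, u]ᵢ₌₁ⁿ → K u` -/
  tendsto_K : ∀ u : X,
    Tendsto (fun n : ℕ => comb (fun _ : Fin n => (n : ℝ)⁻¹) (fun _ => u))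
      atTop (nhds (K u))

namespace CCSpace

variable {X : Type} [MetricSpace X] (S : CCSpace X)

/-- The convexifiable domain `K(X)`: the set of convex points. -/
def KX : Set X := {u : X | S.K u = u}

/-- Binary convex combination with weights in `[0,1]`, extended to the endpoints
by discarding the zero-weight term. -/
noncomputable def comb2 (t : ℝ) (x y : X) : X :=
  if t = 0 then y else if t = 1 then x else S.comb ![t, 1 - t] ![x, y]

/-- Convex combination for nonnegative weights summing to `1`, defined by
discarding the zero-weight terms. -/
noncomputable def combE {n : ℕ} (w : Fin n → ℝ) (u : Fin n → X) : X :=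
  letI : DecidablePred fun i : Fin n => w i ≠ 0 := Classical.decPred _
  S.comb (fun j => w ((Fintype.equivFin {i : Fin n // w i ≠ 0}).symm j))
    (fun j => u ((Fintype.equivFin {i : Fin n // w i ≠ 0}).symm j))

/-- A function is affine if it commutes with all convex combinations. -/
def IsAffine (f : X → ℝ) : Prop :=
  ∀ ⦃n : ℕ⦄ (w : Fin n → ℝ) (x : Fin n → X), (∀ i, 0 < w i) → (∑ i, w i) = 1 →
    f (S.comb w x) = ∑ i, w i * f (x i)

/-- Midpoint convexity. -/
def MidpointConvex (φ : X → ℝ) : Prop :=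
  ∀ x y : X, φ (S.comb ![(1 : ℝ) / 2, 1 / 2] ![x, y]) ≤ (φ x + φ y) / 2

end CCSpace
set_option linter.unusedSectionVars false

namespace CCSpace

variable {X : Type} [MetricSpace X] (S : CCSpace X)

lemma pos2 {a b : ℝ} (ha : 0 < a) (hb : 0 < b) : ∀ i, 0 < (![a, b]) i := by
  intro i; fin_cases i <;> simpa

lemma sum2 {a b : ℝ} (h : a + b = 1) : (∑ i, (![a, b]) i) = 1 := by
  rw [Fin.sum_univ_two]; simpa

lemma pos3 {a b c : ℝ} (ha : 0 < a) (hb : 0 < b) (hc : 0 < c) :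
    ∀ i, 0 < (![a, b, c]) i := by
  intro i; fin_cases i <;> simpa

lemma sum3 {a b c : ℝ} (h : a + b + c = 1) : (∑ i, (![a, b, c]) i) = 1 := by
  rw [Fin.sum_univ_three]; simpa

lemma comb_congr2 {a b a' b' : ℝ} {x y x' y' : X} (ha : a = a') (hb : b = b')
    (hx : x = x') (hy : y = y') :
    S.comb ![a, b] ![x, y] = S.comb ![a', b'] ![x', y'] := by
  subst ha hb hx hy; rfl

lemma perm2 (a b : ℝ) (x y : X) (ha : 0 < a) (hb : 0 < b) (hab : a + b = 1) :
    S.comb ![a, b] ![x, y] = S.comb ![b, a] ![y, x] := by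
  have h := S.comb_perm ![a, b] ![x, y] (Equiv.swap 0 1) (pos2 ha hb) (sum2 hab)
  rw [h]
  congr 1 <;> funext i <;> fin_cases i <;>
    first
      | rfl
      | simp [Equiv.swap_apply_def]

lemma swap01_3 (a b c : ℝ) (x y z : X) (ha : 0 < a) (hb : 0 < b) (hc : 0 < c)
    (hs : a + b + c = 1) :
    S.comb ![a, b, c] ![x, y, z] = S.comb ![b, a, c] ![y, x, z] := by
  have h := S.comb_perm ![a, b, c] ![x, y, z] (Equiv.swap 0 1) (pos3 ha hb hc) (sum3 hs)
  rw [h]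
  congr 1 <;> funext i <;> fin_cases i <;>
    first
      | rfl
      | simp [Equiv.swap_apply_def]

lemma rot3 (a b c : ℝ) (x y z : X) (ha : 0 < a) (hb : 0 < b) (hc : 0 < c)
    (hs : a + b + c = 1) :
    S.comb ![a, b, c] ![x, y, z] = S.comb ![b, c, a] ![y, z, x] := by
  have h := S.comb_perm ![a, b, c] ![x, y, z] (finRotate 3) (pos3 ha hb hc) (sum3 hs)
  rw [h]
  congr 1 <;> funext i <;> fin_cases i <;>
    first
      | rfl
      | simp [finRotate_succ_apply]

lemma assoc3 (a b c : ℝ) (x y z : X) (ha : 0 < a) (hb : 0 < b) (hc : 0 < c)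
    (hs : a + b + c = 1) :
    S.comb ![a, b, c] ![x, y, z] =
      S.comb ![a, b + c] ![x, S.comb ![b / (b + c), c / (b + c)] ![y, z]] := by
  have h := S.comb_assoc ![a, b, c] ![x, y, z] (pos3 ha hb hc) (sum3 hs)
  rw [h]
  congr 1 <;> funext i <;> fin_cases i <;>
    first
      | rfl
      | simp [Fin.snoc]

end CCSpace
namespace CCSpace

variable {X : Type} [MetricSpace X] (S : CCSpace X)

/-- the equal-weight combination of `n` copies of `x` -/
noncomputable def L (n : ℕ) (x : X) : X :=
  S.comb (fun _ : Fin n => (n : ℝ)⁻¹) (fun _ => x)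

lemma L_one (x : X) : S.L 1 x = x := by
  have h := S.comb_single x
  unfold L
  simpa using h

lemma L_lip (n : ℕ) (x y : X) : dist (S.L (n + 1) x) (S.L (n + 1) y) ≤ dist x y := by
  have hpos : ∀ i : Fin (n + 1), 0 < ((n + 1 : ℕ) : ℝ)⁻¹ := by
    intro i; positivity
  have hsum : (∑ _i : Fin (n + 1), ((n + 1 : ℕ) : ℝ)⁻¹) = 1 := by
    rw [Finset.sum_const, Finset.card_univ, Fintype.card_fin, nsmul_eq_mul]
    rw [mul_inv_cancel₀]
    positivity
  have h := S.comb_nc (fun _ : Fin (n + 1) => ((n + 1 : ℕ) : ℝ)⁻¹)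
    (fun _ => x) (fun _ => y) hpos hsum
  unfold L
  calc dist (S.comb (fun _ : Fin (n+1) => ((n+1 : ℕ) : ℝ)⁻¹) fun _ => x)
        (S.comb (fun _ : Fin (n+1) => ((n+1 : ℕ) : ℝ)⁻¹) fun _ => y)
      ≤ ∑ _i : Fin (n + 1), ((n + 1 : ℕ) : ℝ)⁻¹ * dist x y := h
    _ = dist x y := by
        rw [← Finset.sum_mul, hsum, one_mul]

lemma snoc_const {α : Type*} {m : ℕ} (c d : α) (i : Fin (m + 1)) :
    (Fin.snoc (fun _ : Fin m => c) d : Fin (m + 1) → α) i = if (i : ℕ) < m then c else d := by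
  rcases lt_or_ge (i : ℕ) m with hi | hi
  · rw [if_pos hi]
    have : i = Fin.castSucc ⟨i, hi⟩ := by ext; simp
    rw [this, Fin.snoc_castSucc]
  · rw [if_neg (by omega)]
    have : i = Fin.last m := by ext; simp; omega
    rw [this, Fin.snoc_last]

/-- key merging lemma -/
lemma J : ∀ (n : ℕ) (a b : ℝ) (x y : X), 0 < a → 0 < b → (n + 1) * a + b = 1 →
    S.comb (Fin.snoc (fun _ : Fin (n + 1) => a) b) (Fin.snoc (fun _ : Fin (n + 1) => x) y)
      = S.comb ![(n + 1) * a, b] ![S.L (n + 1) x, y] := by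
  intro n
  induction n with
  | zero =>
    intro a b x y ha hb hab
    have h1 : (Fin.snoc (fun _ : Fin 1 => a) b : Fin 2 → ℝ) = ![(0 + 1 : ℕ) * a, b] := by
      funext i; fin_cases i <;> simp [Fin.snoc]
    have h2 : (Fin.snoc (fun _ : Fin 1 => x) y : Fin 2 → X) = ![S.L 1 x, y] := by
      funext i; fin_cases i <;> simp [Fin.snoc, L_one]
    rw [h1, h2]
    norm_num
  | succ n ih =>
    intro a b x y ha hb hab
    have hab' : 0 < a + b := by linarith
    have hsum : (∑ i, (Fin.snoc (fun _ : Fin (n + 2) => a) b : Fin (n + 3) → ℝ) i) = 1 := by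
      rw [Fin.sum_snoc]
      rw [Finset.sum_const, Finset.card_univ, Fintype.card_fin, nsmul_eq_mul]
      push_cast at hab ⊢
      linarith
    have hpos : ∀ i, 0 < (Fin.snoc (fun _ : Fin (n + 2) => a) b : Fin (n + 3) → ℝ) i := by
      intro i
      refine Fin.lastCases ?_ (fun j => ?_) i
      · simpa using hb
      · simpa using ha
    have h := S.comb_assoc (Fin.snoc (fun _ : Fin (n + 2) => a) b)
      (Fin.snoc (fun _ : Fin (n + 2) => x) y) hpos hsum
    -- clean form of the associativity step
    have hq : 0 < (n + 1 : ℝ) * a := by positivity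
    have hzpos : 0 < a / (a + b) ∧ 0 < b / (a + b) := ⟨by positivity, by positivity⟩
    have hzsum : a / (a + b) + b / (a + b) = 1 := by field_simp
    have hA : S.comb (Fin.snoc (fun _ : Fin (n + 2) => a) b)
        (Fin.snoc (fun _ : Fin (n + 2) => x) y) =
        S.comb (Fin.snoc (fun _ : Fin (n + 1) => a) (a + b))
          (Fin.snoc (fun _ : Fin (n + 1) => x) (S.comb ![a / (a + b), b / (a + b)] ![x, y])) := by
      rw [h]
      congr 1
      · funext i
        refine Fin.lastCases ?_ (fun j => ?_) i
        · simp [snoc_const]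
        · simp [snoc_const]
      · funext i
        refine Fin.lastCases ?_ (fun j => ?_) i
        · simp [snoc_const]
        · simp [snoc_const]
          intro hj
          exact absurd hj (by omega)
    have hsum' : (n + 1 : ℝ) * a + (a + b) = 1 := by
      push_cast at hab
      linarith
    have hB := ih a (a + b) x (S.comb ![a / (a + b), b / (a + b)] ![x, y]) ha hab' hsum'
    -- regroup the three terms ((n+1)a, a, b)
    have hq : 0 < (n + 1 : ℝ) * a := by positivity
    have hsum3 : (n + 1 : ℝ) * a + a + b = 1 := by linarith
    have hC := S.assoc3 ((n + 1 : ℝ) * a) a b (S.L (n + 1) x) x y hq ha hb hsum3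
    have hD := S.rot3 ((n + 1 : ℝ) * a) a b (S.L (n + 1) x) x y hq ha hb hsum3
    have hD2 := S.rot3 a b ((n + 1 : ℝ) * a) x y (S.L (n + 1) x) ha hb hq (by linarith)
    have hE := S.assoc3 b ((n + 1 : ℝ) * a) a y (S.L (n + 1) x) x hb hq ha (by linarith)
    -- identify the new inner combination with `L (n+2) x`
    set c := ((n + 2 : ℕ) : ℝ)⁻¹ with hc
    have hc0 : 0 < c := by rw [hc]; positivity
    have hcsum : (n + 1 : ℝ) * c + c = 1 := by
      rw [hc]; push_cast; field_simp; ring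
    have hW : S.comb ![(n + 1 : ℝ) * a / ((n + 1 : ℝ) * a + a), a / ((n + 1 : ℝ) * a + a)]
        ![S.L (n + 1) x, x] = S.L (n + 2) x := by
      have hih := ih c c x x hc0 hc0 hcsum
      have hl : S.L (n + 2) x =
          S.comb (Fin.snoc (fun _ : Fin (n + 1) => c) c)
            (Fin.snoc (fun _ : Fin (n + 1) => x) x) := by
        unfold L
        congr 1
        · funext i
          refine Fin.lastCases ?_ (fun j => ?_) i <;> simp [snoc_const, hc]
        · funext i
          refine Fin.lastCases ?_ (fun j => ?_) i <;> simp [snoc_const]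
      rw [hl, hih]
      refine comb_congr2 S ?_ ?_ rfl rfl
      · rw [hc]; push_cast; rw [div_eq_iff (by positivity)]; field_simp; ring
      · rw [hc]; push_cast; rw [div_eq_iff (by positivity)]; field_simp; ring
    rw [hA, hB, ← hC, hD, hD2, hE, hW,
      S.perm2 b ((n + 1 : ℝ) * a + a) y (S.L (n + 2) x) hb (by linarith) (by linarith)]
    refine comb_congr2 S ?_ rfl rfl rfl
    push_cast; ring

end CCSpace
namespace CCSpace

variable {X : Type} [MetricSpace X] (S : CCSpace X)

/-- peel off one term from an equal-weight combination -/
lemma peel (n : ℕ) (x : X) :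
    S.L (n + 2) x =
      S.comb ![(n + 1 : ℝ) / (n + 2), 1 / (n + 2)] ![S.L (n + 1) x, x] := by
  have hc0 : (0 : ℝ) < ((n + 2 : ℕ) : ℝ)⁻¹ := by positivity
  have hcsum : (n + 1 : ℝ) * ((n + 2 : ℕ) : ℝ)⁻¹ + ((n + 2 : ℕ) : ℝ)⁻¹ = 1 := by
    push_cast; field_simp; ring
  have hih := S.J n (((n + 2 : ℕ) : ℝ)⁻¹) (((n + 2 : ℕ) : ℝ)⁻¹) x x hc0 hc0 hcsum
  have hl : S.L (n + 2) x =
      S.comb (Fin.snoc (fun _ : Fin (n + 1) => ((n + 2 : ℕ) : ℝ)⁻¹) (((n + 2 : ℕ) : ℝ)⁻¹))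
        (Fin.snoc (fun _ : Fin (n + 1) => x) x) := by
    unfold L
    congr 1
    · funext i
      refine Fin.lastCases ?_ (fun j => ?_) i <;> simp [snoc_const]
    · funext i
      refine Fin.lastCases ?_ (fun j => ?_) i <;> simp [snoc_const]
  rw [hl, hih]
  refine comb_congr2 S ?_ ?_ rfl rfl
  · push_cast; field_simp
  · push_cast; field_simp

/-- two-block decomposition of an equal-weight combination -/
lemma two_block : ∀ (q p : ℕ) (x : X),
    S.L (p + 1 + (q + 1)) x =
      S.comb ![(p + 1 : ℝ) / (p + q + 2), (q + 1 : ℝ) / (p + q + 2)]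
        ![S.L (p + 1) x, S.L (q + 1) x] := by
  intro q
  induction q with
  | zero =>
    intro p x
    have h := S.peel p x
    have e : p + 1 + (0 + 1) = p + 2 := by omega
    rw [e, h]
    refine comb_congr2 S ?_ ?_ rfl (S.L_one x).symm <;> push_cast <;> ring
  | succ q ih =>
    intro p x
    have hd3 : ((p : ℝ) + q + 3) ≠ 0 := by positivity
    have hd2 : ((p : ℝ) + q + 2) ≠ 0 := by positivity
    have hp1 : (0:ℝ) < (p + 1 : ℝ) / (p + q + 3) := by positivity
    have hq1 : (0:ℝ) < (q + 1 : ℝ) / (p + q + 3) := by positivity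
    have he : (0:ℝ) < (1 : ℝ) / (p + q + 3) := by positivity
    have hs3 : (1 : ℝ) / (p + q + 3) + (p + 1 : ℝ) / (p + q + 3)
        + (q + 1 : ℝ) / (p + q + 3) = 1 := by field_simp; ring
    -- step 1 : peel one off
    have h1 : S.L (p + 1 + (q + 2)) x =
        S.comb ![(p + q + 2 : ℝ) / (p + q + 3), 1 / (p + q + 3)]
          ![S.L (p + 1 + (q + 1)) x, x] := by
      have h := S.peel (p + q + 1) x
      have e1 : p + 1 + (q + 2) = p + q + 1 + 2 := by omega
      have e2 : p + 1 + (q + 1) = p + q + 1 + 1 := by omega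
      rw [e1, e2, h]
      refine comb_congr2 S ?_ ?_ rfl rfl <;> push_cast <;> ring
    have h2 := ih p x
    have hA := S.perm2 ((p + q + 2 : ℝ) / (p + q + 3)) ((1:ℝ) / (p + q + 3))
      (S.comb ![(p + 1 : ℝ) / (p + q + 2), (q + 1 : ℝ) / (p + q + 2)]
        ![S.L (p + 1) x, S.L (q + 1) x]) x (by positivity) he (by field_simp; ring)
    have hB := S.assoc3 ((1:ℝ) / (p + q + 3)) ((p + 1 : ℝ) / (p + q + 3))
      ((q + 1 : ℝ) / (p + q + 3)) x (S.L (p + 1) x) (S.L (q + 1) x) he hp1 hq1 hs3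
    have hB' : S.comb ![(1:ℝ) / (p + q + 3), (p + q + 2 : ℝ) / (p + q + 3)]
        ![x, S.comb ![(p + 1 : ℝ) / (p + q + 2), (q + 1 : ℝ) / (p + q + 2)]
          ![S.L (p + 1) x, S.L (q + 1) x]] =
        S.comb ![(1:ℝ) / (p + q + 3),
            (p + 1 : ℝ) / (p + q + 3) + (q + 1 : ℝ) / (p + q + 3)]
          ![x, S.comb
            ![((p + 1 : ℝ) / (p + q + 3)) / ((p + 1 : ℝ) / (p + q + 3) + (q + 1 : ℝ) / (p + q + 3)),
              ((q + 1 : ℝ) / (p + q + 3)) / ((p + 1 : ℝ) / (p + q + 3) + (q + 1 : ℝ) / (p + q + 3))]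
            ![S.L (p + 1) x, S.L (q + 1) x]] := by
      refine comb_congr2 S rfl ?_ rfl (comb_congr2 S ?_ ?_ rfl rfl)
      · field_simp; ring
      · rw [eq_div_iff (by positivity)]; field_simp
        try ring
        try tauto
      · rw [eq_div_iff (by positivity)]; field_simp
        try ring
        try tauto
    have hC := S.rot3 ((1:ℝ) / (p + q + 3)) ((p + 1 : ℝ) / (p + q + 3))
      ((q + 1 : ℝ) / (p + q + 3)) x (S.L (p + 1) x) (S.L (q + 1) x) he hp1 hq1 hs3
    have hD := S.assoc3 ((p + 1 : ℝ) / (p + q + 3)) ((q + 1 : ℝ) / (p + q + 3))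
      ((1:ℝ) / (p + q + 3)) (S.L (p + 1) x) (S.L (q + 1) x) x hp1 hq1 he (by linarith)
    have hE : S.comb ![(p + 1 : ℝ) / (p + q + 3),
          (q + 1 : ℝ) / (p + q + 3) + (1:ℝ) / (p + q + 3)]
        ![S.L (p + 1) x, S.comb
          ![((q + 1 : ℝ) / (p + q + 3)) / ((q + 1 : ℝ) / (p + q + 3) + (1:ℝ) / (p + q + 3)),
            ((1:ℝ) / (p + q + 3)) / ((q + 1 : ℝ) / (p + q + 3) + (1:ℝ) / (p + q + 3))]
          ![S.L (q + 1) x, x]] =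
        S.comb ![(p + 1 : ℝ) / (p + (q + 1) + 2), (q + 1 + 1 : ℝ) / (p + (q + 1) + 2)]
          ![S.L (p + 1) x, S.L (q + 2) x] := by
      refine comb_congr2 S ?_ ?_ rfl ?_
      · push_cast; ring
      · field_simp
        push_cast
        try ring
        try tauto
      · rw [S.peel q x]
        refine (comb_congr2 S ?_ ?_ rfl rfl).symm
        · rw [div_eq_div_iff (by positivity) (by positivity)]
          field_simp
          push_cast
          try ring
          try tauto
        · rw [div_eq_div_iff (by positivity) (by positivity)]
          field_simp
          push_cast
          try ring
          try tauto
    calc S.L (p + 1 + (q + 1 + 1)) x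
        = S.comb ![(p + q + 2 : ℝ) / (p + q + 3), 1 / (p + q + 3)]
            ![S.L (p + 1 + (q + 1)) x, x] := h1
      _ = _ := by
          rw [h2, hA, hB', ← hB, hC, hD, hE]
          refine comb_congr2 S ?_ ?_ rfl rfl <;> push_cast <;> ring

end CCSpace
namespace CCSpace

variable {X : Type} [MetricSpace X] (S : CCSpace X)

lemma L_mul (m : ℕ) (x : X) : ∀ n : ℕ,
    S.L (n + 1) (S.L (m + 1) x) = S.L ((n + 1) * (m + 1)) x := by
  intro n
  induction n with
  | zero =>
    rw [S.L_one]
    congr 1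
    omega
  | succ n ih =>
    show S.L (n + 2) (S.L (m + 1) x) = S.L ((n + 1 + 1) * (m + 1)) x
    have hone : 1 ≤ (n + 1) * (m + 1) := Nat.one_le_iff_ne_zero.mpr (by positivity)
    have e' : (n + 1 + 1) * (m + 1) = (n + 1) * (m + 1) + (m + 1) := by ring
    have e2 : (n + 1) * (m + 1) - 1 + 1 = (n + 1) * (m + 1) := by omega
    rw [e']
    have h := S.two_block m ((n + 1) * (m + 1) - 1) x
    rw [e2] at h
    rw [h, ← ih, S.peel n (S.L (m + 1) x)]
    have hc : (((n + 1) * (m + 1) - 1 : ℕ) : ℝ) = ((n : ℝ) + 1) * ((m : ℝ) + 1) - 1 := by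
      rw [Nat.cast_sub hone]
      push_cast; ring
    have hd : (0 : ℝ) < ((n : ℝ) + 1) * ((m : ℝ) + 1) - 1 + (m : ℝ) + 2 := by
      have h1 : (0:ℝ) ≤ (n : ℝ) := Nat.cast_nonneg n
      have h2 : (0:ℝ) ≤ (m : ℝ) := Nat.cast_nonneg m
      nlinarith
    refine (comb_congr2 S ?_ ?_ rfl rfl).symm
    · rw [hc, div_eq_div_iff (ne_of_gt hd) (by positivity)]
      ring
    · rw [hc, div_eq_div_iff (ne_of_gt hd) (by positivity)]
      ring

lemma tendsto_L (x : X) : Tendsto (fun n : ℕ => S.L n x) atTop (nhds (S.K x)) :=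
  S.tendsto_K x

/-- a convex point is fixed under all equal-weight self-combinations -/
lemma L_fixed {u : X} (hu : S.K u = u) (n : ℕ) : S.L (n + 1) u = u := by
  have h1 : Tendsto (fun m : ℕ => S.L (m + 1) u) atTop (nhds u) := by
    have := (S.tendsto_L u).comp (tendsto_add_atTop_nat 1)
    rwa [hu] at this
  have h2 : Tendsto (fun m : ℕ => S.L ((n + 1) * (m + 1)) u) atTop (nhds u) := by
    have := (S.tendsto_L u).comp
      (tendsto_atTop_atTop.mpr (fun b => ⟨b, fun a ha => by nlinarith⟩) :
        Tendsto (fun m : ℕ => (n + 1) * (m + 1)) atTop atTop)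
    rwa [hu] at this
  have h3 : Tendsto (fun m : ℕ => S.L (n + 1) (S.L (m + 1) u)) atTop (nhds (S.L (n + 1) u)) := by
    rw [tendsto_iff_dist_tendsto_zero]
    refine squeeze_zero (fun m => dist_nonneg) (fun m => S.L_lip n _ _) ?_
    rw [← tendsto_iff_dist_tendsto_zero]
    exact h1
  have h4 : Tendsto (fun m : ℕ => S.L (n + 1) (S.L (m + 1) u)) atTop (nhds u) := by
    refine h2.congr (fun m => ?_)
    rw [S.L_mul m u]
  exact tendsto_nhds_unique h3 h4

end CCSpace
namespace CCSpace

variable {X : Type} [MetricSpace X] (S : CCSpace X) {u : X}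

lemma F_k (hu : S.K u = u) (k : ℕ) :
    S.comb ![(k + 1 : ℝ) / (k + 2), 1 / (k + 2)] ![u, u] = u := by
  have h := S.peel k u
  have h1 : S.L (k + 1) u = u := S.L_fixed hu k
  have h2 : S.L (k + 2) u = u := S.L_fixed hu (k + 1)
  rw [h1] at h
  rw [← h, h2]

lemma F_1k (hu : S.K u = u) (k : ℕ) :
    S.comb ![1 / (k + 2 : ℝ), (k + 1 : ℝ) / (k + 2)] ![u, u] = u := by
  have hk : (0:ℝ) < (k + 1 : ℝ) / (k + 2) := by positivity
  have h1 : (0:ℝ) < 1 / (k + 2 : ℝ) := by positivity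
  rw [S.perm2 _ _ u u h1 hk (by field_simp; ring)]
  exact S.F_k hu k

lemma F_rat (hu : S.K u = u) : ∀ n p k : ℕ, p + k = n →
    S.comb ![(p + 1 : ℝ) / (p + k + 2), (k + 1 : ℝ) / (p + k + 2)] ![u, u] = u := by
  intro n
  induction n using Nat.strong_induction_on with
  | _ n ih =>
    intro p k hpk
    match k with
    | 0 =>
      refine Eq.trans ?_ (S.F_k hu p)
      refine comb_congr2 S ?_ ?_ rfl rfl <;> push_cast <;> ring
    | (k' + 1) =>
      have hd : (0:ℝ) < (p : ℝ) + (k' + 1) + 2 := by positivity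
      have ha : (0:ℝ) < (p + 1 : ℝ) / ((p : ℝ) + (k' + 1) + 2) := by positivity
      have hb : (0:ℝ) < 1 / ((p : ℝ) + (k' + 1) + 2) := by positivity
      have hc : (0:ℝ) < (k' + 1 : ℝ) / ((p : ℝ) + (k' + 1) + 2) := by positivity
      have hsum : (p + 1 : ℝ) / ((p : ℝ) + (k' + 1) + 2) + 1 / ((p : ℝ) + (k' + 1) + 2)
          + (k' + 1 : ℝ) / ((p : ℝ) + (k' + 1) + 2) = 1 := by
        field_simp; ring
      set A := S.comb ![(p + 1 : ℝ) / ((p : ℝ) + (k' + 1) + 2), 1 / ((p : ℝ) + (k' + 1) + 2),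
          (k' + 1 : ℝ) / ((p : ℝ) + (k' + 1) + 2)] ![u, u, u] with hA
      -- first grouping : A equals the goal's combination
      have h1 := S.assoc3 ((p + 1 : ℝ) / ((p : ℝ) + (k' + 1) + 2))
        (1 / ((p : ℝ) + (k' + 1) + 2)) ((k' + 1 : ℝ) / ((p : ℝ) + (k' + 1) + 2))
        u u u ha hb hc hsum
      have hin1 : S.comb ![1 / ((p : ℝ) + (k' + 1) + 2) /
            (1 / ((p : ℝ) + (k' + 1) + 2) + (k' + 1 : ℝ) / ((p : ℝ) + (k' + 1) + 2)),
          (k' + 1 : ℝ) / ((p : ℝ) + (k' + 1) + 2) /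
            (1 / ((p : ℝ) + (k' + 1) + 2) + (k' + 1 : ℝ) / ((p : ℝ) + (k' + 1) + 2))]
          ![u, u] = u := by
        refine Eq.trans ?_ (S.F_1k hu k')
        refine comb_congr2 S ?_ ?_ rfl rfl
        · rw [div_eq_div_iff (by positivity) (by positivity)]
          field_simp
          try ring
          try tauto
        · rw [div_eq_div_iff (by positivity) (by positivity)]
          field_simp
          try ring
          try tauto
      have h1' : A = S.comb ![(p + 1 : ℝ) / (p + (k' + 1) + 2),
          (k' + 1 + 1 : ℝ) / (p + (k' + 1) + 2)] ![u, u] := by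
        rw [hA, h1, hin1]
        refine comb_congr2 S rfl ?_ rfl rfl
        field_simp
        try ring
        try tauto
      -- second grouping : A equals u
      have h2 := S.swap01_3 ((p + 1 : ℝ) / ((p : ℝ) + (k' + 1) + 2))
        (1 / ((p : ℝ) + (k' + 1) + 2)) ((k' + 1 : ℝ) / ((p : ℝ) + (k' + 1) + 2))
        u u u ha hb hc hsum
      have h3 := S.assoc3 (1 / ((p : ℝ) + (k' + 1) + 2))
        ((p + 1 : ℝ) / ((p : ℝ) + (k' + 1) + 2)) ((k' + 1 : ℝ) / ((p : ℝ) + (k' + 1) + 2))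
        u u u hb ha hc (by linarith)
      have hin2 : S.comb ![(p + 1 : ℝ) / ((p : ℝ) + (k' + 1) + 2) /
            ((p + 1 : ℝ) / ((p : ℝ) + (k' + 1) + 2) + (k' + 1 : ℝ) / ((p : ℝ) + (k' + 1) + 2)),
          (k' + 1 : ℝ) / ((p : ℝ) + (k' + 1) + 2) /
            ((p + 1 : ℝ) / ((p : ℝ) + (k' + 1) + 2) + (k' + 1 : ℝ) / ((p : ℝ) + (k' + 1) + 2))]
          ![u, u] = u := by
        refine Eq.trans ?_ (ih (p + k') (by omega) p k' rfl)
        refine comb_congr2 S ?_ ?_ rfl rfl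
        · rw [div_eq_div_iff (by positivity) (by positivity)]
          push_cast
          field_simp
          try ring
          try tauto
        · rw [div_eq_div_iff (by positivity) (by positivity)]
          push_cast
          field_simp
          try ring
          try tauto
      have h4 : A = u := by
        rw [hA, h2, h3, hin2]
        refine Eq.trans ?_ (S.F_1k hu (p + k' + 1))
        refine comb_congr2 S ?_ ?_ rfl rfl
        · push_cast
          field_simp
          try ring
        · push_cast
          field_simp
          try ring
          try tauto
      refine Eq.trans ?_ (h1'.symm.trans h4)
      refine comb_congr2 S ?_ ?_ rfl rfl <;> push_cast <;> ring

end CCSpace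
namespace CCSpace

variable {X : Type} [MetricSpace X] (S : CCSpace X) {u : X}

lemma F_real (hu : S.K u = u) {l : ℝ} (hl : l ∈ Set.Ioo (0:ℝ) 1) :
    S.comb ![l, 1 - l] ![u, u] = u := by
  obtain ⟨hl0, hl1⟩ := hl
  set F : ℝ → X := fun t => S.comb ![t, 1 - t] ![u, u] with hF
  set t : ℕ → ℝ := fun n => ((⌊l * ((n : ℝ) + 2)⌋₊ : ℕ) : ℝ) / ((n : ℝ) + 2) with ht
  have hden : ∀ n : ℕ, (0:ℝ) < (n : ℝ) + 2 := fun n => by positivity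
  have hatop : Tendsto (fun n : ℕ => (n : ℝ) + 2) atTop atTop :=
    tendsto_atTop_add_const_right atTop 2 tendsto_natCast_atTop_atTop
  have hmul : Tendsto (fun n : ℕ => l * ((n : ℝ) + 2)) atTop atTop :=
    hatop.const_mul_atTop hl0
  have hNbig : ∀ᶠ n : ℕ in atTop, (1:ℝ) ≤ l * ((n : ℝ) + 2) :=
    hmul.eventually_ge_atTop 1
  have hfloor_le : ∀ n : ℕ, ((⌊l * ((n : ℝ) + 2)⌋₊ : ℕ) : ℝ) ≤ l * ((n : ℝ) + 2) :=
    fun n => Nat.floor_le (by positivity)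
  have hlt : ∀ n : ℕ, l * ((n : ℝ) + 2) < ((⌊l * ((n : ℝ) + 2)⌋₊ : ℕ) : ℝ) + 1 :=
    fun n => Nat.lt_floor_add_one _
  -- t n ≤ l and l - 1/(n+2) ≤ t n
  have hub : ∀ n : ℕ, t n ≤ l := by
    intro n
    rw [ht, div_le_iff₀ (hden n)]
    simpa [mul_comm] using hfloor_le n
  have hlb : ∀ n : ℕ, l - 1 / ((n : ℝ) + 2) ≤ t n := by
    intro n
    rw [ht, le_div_iff₀ (hden n)]
    have := hlt n
    have h2 := hden n
    field_simp
    nlinarith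
  have hzero : Tendsto (fun n : ℕ => 1 / ((n : ℝ) + 2)) atTop (nhds 0) := by
    simp only [one_div]
    exact hatop.inv_tendsto_atTop
  have htend : Tendsto t atTop (nhds l) := by
    refine tendsto_of_tendsto_of_tendsto_of_le_of_le ?_ tendsto_const_nhds hlb hub
    simpa using tendsto_const_nhds.sub hzero
  have hmem : ∀ᶠ n : ℕ in atTop, t n ∈ Set.Ioo (0:ℝ) 1 := by
    filter_upwards [hNbig] with n hn
    constructor
    · rw [ht]
      have h1 : 1 ≤ ⌊l * ((n : ℝ) + 2)⌋₊ := Nat.le_floor (by exact_mod_cast hn)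
      have : (0:ℝ) < ((⌊l * ((n : ℝ) + 2)⌋₊ : ℕ) : ℝ) := by exact_mod_cast h1
      positivity
    · exact lt_of_le_of_lt (hub n) hl1
  have hvals : ∀ᶠ n : ℕ in atTop, F (t n) = u := by
    filter_upwards [hNbig] with n hn
    set N := ⌊l * ((n : ℝ) + 2)⌋₊ with hN
    have h1 : 1 ≤ N := Nat.le_floor (by exact_mod_cast hn)
    have h2 : N ≤ n + 1 := by
      have : N < n + 2 := by
        rw [hN, Nat.floor_lt (by positivity)]
        calc l * ((n : ℝ) + 2) < 1 * ((n : ℝ) + 2) := by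
              apply mul_lt_mul_of_pos_right hl1 (hden n)
          _ = (n : ℝ) + 2 := one_mul _
          _ = ((n + 2 : ℕ) : ℝ) := by push_cast; ring
      omega
    have hfr := S.F_rat hu n (N - 1) (n + 1 - N) (by omega)
    have e1 : ((N - 1 : ℕ) : ℝ) + 1 = (N : ℝ) := by
      rw [Nat.cast_sub h1]; push_cast; ring
    have e2 : ((N - 1 : ℕ) : ℝ) + ((n + 1 - N : ℕ) : ℝ) + 2 = (n : ℝ) + 2 := by
      rw [Nat.cast_sub h1, Nat.cast_sub h2]; push_cast; ring
    have e3 : ((n + 1 - N : ℕ) : ℝ) + 1 = ((n : ℝ) + 2) - (N : ℝ) := by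
      rw [Nat.cast_sub h2]; push_cast; ring
    rw [e1, e2, e3] at hfr
    refine Eq.trans ?_ hfr
    rw [hF]
    refine comb_congr2 S rfl ?_ rfl rfl
    rw [ht]
    field_simp
    rw [hN]
  -- conclude by continuity
  have hcont : Tendsto F (nhdsWithin l (Set.Ioo (0:ℝ) 1)) (nhds (F l)) :=
    (S.comb_cont u u l ⟨hl0, hl1⟩).tendsto
  have h5 : Tendsto t atTop (nhdsWithin l (Set.Ioo (0:ℝ) 1)) :=
    tendsto_nhdsWithin_iff.mpr ⟨htend, hmem⟩
  have h6 : Tendsto (fun n => F (t n)) atTop (nhds (F l)) := hcont.comp h5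
  have h7 : Tendsto (fun n => F (t n)) atTop (nhds u) :=
    Tendsto.congr' (hvals.mono fun n h => h.symm) tendsto_const_nhds
  exact tendsto_nhds_unique h6 h7

end CCSpace
/-- In a CC space, for `u, v` in the convexifiable domain and `λ ∈ (0,1)`,
`d([λ,u;1−λ,v], u) = (1−λ) d(u,v)` and `d([λ,u;1−λ,v], v) = λ d(u,v)`. -/
theorem stmt0 {X : Type} [MetricSpace X] (S : CCSpace X) (u v : X)
    (hu : u ∈ S.KX) (hv : v ∈ S.KX) (l : ℝ) (hl : l ∈ Set.Ioo (0 : ℝ) 1) :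
    dist (S.comb ![l, 1 - l] ![u, v]) u = (1 - l) * dist u v ∧
      dist (S.comb ![l, 1 - l] ![u, v]) v = l * dist u v := by
  obtain ⟨hl0, hl1⟩ := hl
  have hl1' : (0:ℝ) < 1 - l := by linarith
  have hpos := CCSpace.pos2 hl0 hl1'
  have hsum : (∑ i, (![l, 1 - l]) i) = 1 := CCSpace.sum2 (by ring)
  have hcu : S.comb ![l, 1 - l] ![u, u] = u := S.F_real hu ⟨hl0, hl1⟩
  have hcv : S.comb ![l, 1 - l] ![v, v] = v := S.F_real hv ⟨hl0, hl1⟩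
  have h1 : dist (S.comb ![l, 1 - l] ![u, v]) u ≤ (1 - l) * dist u v := by
    have h := S.comb_nc ![l, 1 - l] ![u, v] ![u, u] hpos hsum
    rw [hcu, Fin.sum_univ_two] at h
    simpa [dist_comm] using h
  have h2 : dist (S.comb ![l, 1 - l] ![u, v]) v ≤ l * dist u v := by
    have h := S.comb_nc ![l, 1 - l] ![u, v] ![v, v] hpos hsum
    rw [hcv, Fin.sum_univ_two] at h
    simpa [dist_comm] using h
  have htri : dist u v ≤ dist (S.comb ![l, 1 - l] ![u, v]) u
      + dist (S.comb ![l, 1 - l] ![u, v]) v := by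
    have := dist_triangle u (S.comb ![l, 1 - l] ![u, v]) v
    simpa [dist_comm] using this
  constructor <;> linarith
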